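/- Let P : [0,ε) → 𝒮_n^+ type data be given as follows: suppose X : [0,ε) → ℝ^{n×n} is differentiable with X(0) = I and X'(0) = Df, P₀, P : [0,ε) → 𝒮_n differentiable with P(0) = P₀ ≻ 0, and λ : [0,ε) → ℝ, v : [0,ε) → ℝ^n differentiable with ‖v(t)‖ ≡ 1 satisfy X(t)^T P(t) X(t) v(t) = λ(t) P₀ v(t) for all t. Then λ(0) = 1 and (Df^T P₀ + P₀ Df + P'(0) − λ'(0) P₀) v(0) = 0. -/

import Mathlib

open Matrix

attribute [local instance] Matrix.normedAddCommGroup Matrix.normedSpace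

/-- if `X(t)ᵀ P(t) X(t) v(t) = λ(t) P₀ v(t)` on `[0,ε)` with `X(0) = I`,
`X'(0) = Df`, `P(0) = P₀ ≻ 0`, `‖v(t)‖ ≡ 1`, then `λ(0) = 1` and
`(Dfᵀ P₀ + P₀ Df + P'(0) − λ'(0) P₀) v(0) = 0`. -/
theorem derivative_of_generalized_singular_value {n : ℕ} (ε : ℝ) (hε : 0 < ε)
    (Df P₀ P' : Matrix (Fin n) (Fin n) ℝ)
    (X P : ℝ → Matrix (Fin n) (Fin n) ℝ)
    (lam : ℝ → ℝ) (lam' : ℝ) (v : ℝ → (Fin n → ℝ)) (v' : Fin n → ℝ)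
    (hX0 : X 0 = 1) (hX : HasDerivWithinAt X Df (Set.Ico 0 ε) 0)
    (hP0 : P 0 = P₀) (hP₀pos : P₀.PosDef)
    (hPsymm : ∀ t ∈ Set.Ico 0 ε, (P t).IsSymm)
    (hP : HasDerivWithinAt P P' (Set.Ico 0 ε) 0)
    (hlam : HasDerivWithinAt lam lam' (Set.Ico 0 ε) 0)
    (hv : HasDerivWithinAt v v' (Set.Ico 0 ε) 0)
    (hnorm : ∀ t ∈ Set.Ico 0 ε, ∑ i, v t i ^ 2 = 1)
    (heq : ∀ t ∈ Set.Ico 0 ε,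
      ((X t)ᵀ * P t * X t).mulVec (v t) = lam t • P₀.mulVec (v t)) :
    lam 0 = 1 ∧ (Dfᵀ * P₀ + P₀ * Df + P' - lam' • P₀).mulVec (v 0) = 0 := by
  set s : Set ℝ := Set.Ico 0 ε with hs
  have h0s : (0 : ℝ) ∈ s := ⟨le_refl 0, hε⟩
  -- v 0 ≠ 0
  have hv0 : v 0 ≠ 0 := by
    intro h
    have := hnorm 0 h0s
    rw [h] at this
    simp at this
  -- P₀ v0 ≠ 0
  have hw0 : P₀.mulVec (v 0) ≠ 0 := by
    intro h
    have hpos := hP₀pos.dotProduct_mulVec_pos hv0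
    rw [h] at hpos
    simp at hpos
  -- lam 0 = 1
  have heq0 := heq 0 h0s
  rw [hX0, hP0] at heq0
  simp only [transpose_one, one_mul, mul_one] at heq0
  have hlam0 : lam 0 = 1 := by
    by_contra hne
    have : (lam 0 - 1) • P₀.mulVec (v 0) = 0 := by
      rw [sub_smul, one_smul, ← heq0, sub_self]
    rcases smul_eq_zero.mp this with h | h
    · exact hne (by linarith [sub_eq_zero.mp h])
    · exact hw0 h
  refine ⟨hlam0, ?_⟩
  -- entrywise derivatives
  have hXij : ∀ a b, HasDerivWithinAt (fun t => X t a b) (Df a b) s 0 := fun a b =>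
    hasDerivWithinAt_pi.mp (hasDerivWithinAt_pi.mp hX a) b
  have hPij : ∀ a b, HasDerivWithinAt (fun t => P t a b) (P' a b) s 0 := fun a b =>
    hasDerivWithinAt_pi.mp (hasDerivWithinAt_pi.mp hP a) b
  have hvj : ∀ b, HasDerivWithinAt (fun t => v t b) (v' b) s 0 := fun b =>
    hasDerivWithinAt_pi.mp hv b
  funext i
  set F : ℝ → ℝ := fun t =>
    (∑ j, (∑ l, (∑ k, X t k i * P t k l) * X t l j) * v t j) -
      lam t * ∑ j, P₀ i j * v t j with hF
  -- F vanishes on s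
  have hF0 : ∀ t ∈ s, F t = 0 := by
    intro t ht
    have h := congrFun (heq t ht) i
    simp only [mulVec, dotProduct, mul_apply, transpose_apply, Pi.smul_apply,
      smul_eq_mul] at h
    rw [hF, sub_eq_zero]
    exact h
  -- derivative of F within s at 0
  set B' : Fin n → ℝ := fun j => ∑ l,
      ((∑ k, (Df k i * P 0 k l + X 0 k i * P' k l)) * X 0 l j +
        (∑ k, X 0 k i * P 0 k l) * Df l j) with hB'
  set D : ℝ :=
    (∑ j, (B' j * v 0 j + (∑ l, (∑ k, X 0 k i * P 0 k l) * X 0 l j) * v' j)) -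
      (lam' * ∑ j, P₀ i j * v 0 j + lam 0 * ∑ j, P₀ i j * v' j) with hD
  have hFD : HasDerivWithinAt F D s 0 := by
    apply HasDerivWithinAt.sub
    · apply HasDerivWithinAt.fun_sum
      intro j _
      refine HasDerivWithinAt.mul ?_ (hvj j)
      apply HasDerivWithinAt.fun_sum
      intro l _
      refine HasDerivWithinAt.mul ?_ (hXij l j)
      apply HasDerivWithinAt.fun_sum
      intro k _
      exact (hXij k i).mul (hPij k l)
    · refine hlam.mul ?_
      apply HasDerivWithinAt.fun_sum
      intro j _
      exact (hvj j).const_mul (P₀ i j)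
  have hFzero : HasDerivWithinAt F 0 s 0 :=
    (hasDerivWithinAt_const 0 s (0 : ℝ)).congr hF0 (hF0 0 h0s)
  have hDeq : D = 0 := by
    have h1 := hFD.derivWithin (uniqueDiffOn_Ico 0 ε 0 h0s)
    have h2 := hFzero.derivWithin (uniqueDiffOn_Ico 0 ε 0 h0s)
    rw [h1] at h2; exact h2
  -- simplify D using X 0 = 1, P 0 = P₀, lam 0 = 1
  rw [hD, hB', hX0, hP0, hlam0] at hDeq
  simp only [one_apply, mul_ite, mul_one, mul_zero, ite_mul, zero_mul, one_mul,
    Finset.sum_ite_eq, Finset.sum_ite_eq', Finset.mem_univ, if_true] at hDeq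
  -- conclude
  simp only [mulVec, dotProduct, Matrix.sub_apply, Matrix.add_apply, Matrix.smul_apply, mul_apply,
    transpose_apply, smul_eq_mul, Pi.zero_apply]
  simp only [Finset.sum_add_distrib, Finset.sum_ite_eq, Finset.sum_ite_eq',
    Finset.mem_univ, if_true, add_mul, sub_mul, one_mul, Finset.mul_sum,
    Finset.sum_sub_distrib, mul_assoc] at hDeq ⊢
  linarith [hDeq]
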